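/- Let (Ω, ℱ, μ) be a probability space, E and F measurable spaces, Z : Ω → E, W : Ω → F, U : Ω → ℝ, Y : Ω → ℝ random variables with Y integrable, g : E × F → ℝ measurable, and define Y* := g(Z, W) + U. Fix w ∈ F with μ(W = w) > 0 and let μ_w := μ(· | {W = w}) be the conditional probability measure. Assume: (i) h : ℝ × F → ℝ is measurable, h(Y*, W) is μ-integrable, and (ω ↦ h(Y*(ω), W(ω))) is a version of E[Y | σ(Y*, Z, W)] under μ; (ii) under μ_w the random variables Z and U are independent; (iii) for every t ∈ ℝ the random variable ω ↦ h(t + U(ω), w) is μ_w-integrable. Define H_w : ℝ → ℝ by H_w(t) := E_{μ_w}[h(t + U, w)] and g_w : E → ℝ by g_w(z) := g(z, w). Then, under the measure μ_w, H_w(g_w(Z)) is a version of the conditional expectation E_{μ_w}[Y | σ(Z)]. -/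

import Mathlib

open MeasureTheory ProbabilityTheory

/-- Theorem 2.1 with a discrete control `W` taking value `w` with positive probability:
under the exclusion restriction `E[Y | Y*, Z, W] = h(Y*, W)` and conditional exogeneity
of `Z` and `U` given `W = w`, the conditional mean of `Y` given `Z` under the
conditional measure `μ_w := μ(· | W = w)` is `H_w(g_w(Z))`, where
`H_w(t) := E_{μ_w}[h(t + U, w)]` and `g_w(z) := g(z, w)`. -/
theorem stmt_19 {Ω E F : Type*} [MeasurableSpace Ω] [MeasurableSpace E]
    [MeasurableSpace F] [MeasurableSingletonClass F]
    (μ : Measure Ω) [IsProbabilityMeasure μ]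
    (Z : Ω → E) (W : Ω → F) (U Y : Ω → ℝ)
    (hZmeas : Measurable Z) (hWmeas : Measurable W)
    (hUmeas : Measurable U) (hYmeas : Measurable Y)
    (hYint : Integrable Y μ)
    (g : E × F → ℝ) (hgmeas : Measurable g)
    (Ystar : Ω → ℝ) (hYstar : ∀ ω, Ystar ω = g (Z ω, W ω) + U ω)
    (w : F) (hw : 0 < μ {ω | W ω = w})
    (μw : Measure Ω) (hμw : μw = μ[|{ω | W ω = w}])
    (h : ℝ × F → ℝ) (hhmeas : Measurable h)
    (hhint : Integrable (fun ω => h (Ystar ω, W ω)) μ)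
    (hcond : μ[Y | MeasurableSpace.comap (fun ω => (Ystar ω, Z ω, W ω)) inferInstance]
        =ᵐ[μ] fun ω => h (Ystar ω, W ω))
    (hindep : IndepFun Z U μw)
    (hint : ∀ t : ℝ, Integrable (fun ω => h (t + U ω, w)) μw)
    (Hw : ℝ → ℝ) (hHw : ∀ t : ℝ, Hw t = ∫ ω, h (t + U ω, w) ∂μw)
    (gw : E → ℝ) (hgw : ∀ z : E, gw z = g (z, w)) :
    μw[Y | MeasurableSpace.comap Z inferInstance] =ᵐ[μw] fun ω => Hw (gw (Z ω)) := by
  -- basic setup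
  set s : Set Ω := {ω | W ω = w} with hs_def
  have hs : MeasurableSet s := hWmeas (measurableSet_singleton w)
  have hsne : μ s ≠ 0 := hw.ne'
  have hc_ne_top : (μ s)⁻¹ ≠ ⊤ := ENNReal.inv_ne_top.mpr hsne
  have hμw' : μw = (μ s)⁻¹ • μ.restrict s := by rw [hμw, ProbabilityTheory.cond]
  haveI : IsProbabilityMeasure μw := by
    rw [hμw]; exact cond_isProbabilityMeasure hsne
  have hYstarmeas : Measurable Ystar := by
    have : Ystar = fun ω => g (Z ω, W ω) + U ω := funext hYstar
    rw [this]; exact (hgmeas.comp (hZmeas.prodMk hWmeas)).add hUmeas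
  -- a.e. W = w under μw
  have hWae : ∀ᵐ ω ∂μw, W ω = w := by
    rw [hμw']
    exact Measure.ae_smul_measure (ae_restrict_mem hs) _
  -- a.e. Ystar = gw (Z) + U under μw
  have hYstar_ae : ∀ᵐ ω ∂μw, h (Ystar ω, W ω) = h (gw (Z ω) + U ω, w) := by
    filter_upwards [hWae] with ω hω
    rw [hYstar ω, hω, hgw]
  -- integrability transfer from μ to μw
  have hIntTrans : ∀ (f : Ω → ℝ), Integrable f μ → Integrable f μw := by
    intro f hf
    rw [hμw']
    exact (hf.restrict).smul_measure hc_ne_top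
  have hYintw : Integrable Y μw := hIntTrans Y hYint
  have hhintw : Integrable (fun ω => h (Ystar ω, W ω)) μw := hIntTrans _ hhint
  have hφintw : Integrable (fun ω => h (gw (Z ω) + U ω, w)) μw :=
    hhintw.congr hYstar_ae
  -- product structure from independence
  set νZ : Measure E := μw.map Z with hνZ
  set νU : Measure ℝ := μw.map U with hνU
  haveI : IsProbabilityMeasure νZ := Measure.isProbabilityMeasure_map hZmeas.aemeasurable
  haveI : IsProbabilityMeasure νU := Measure.isProbabilityMeasure_map hUmeas.aemeasurable
  have hρ : μw.map (fun ω => (Z ω, U ω)) = νZ.prod νU :=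
    (indepFun_iff_map_prod_eq_prod_map_map hZmeas.aemeasurable hUmeas.aemeasurable).mp hindep
  -- the kernel function
  set φ : E × ℝ → ℝ := fun p => h (gw p.1 + p.2, w) with hφ_def
  have hgwmeas : Measurable gw := by
    have : gw = fun z => g (z, w) := funext hgw
    rw [this]; exact hgmeas.comp (measurable_id.prodMk measurable_const)
  have hφmeas : Measurable φ :=
    hhmeas.comp (((hgwmeas.comp measurable_fst).add measurable_snd).prodMk measurable_const)
  have hZUmeas : Measurable (fun ω => (Z ω, U ω)) := hZmeas.prodMk hUmeas
  have hφρ : Integrable φ (νZ.prod νU) := by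
    rw [← hρ]
    exact (integrable_map_measure hφmeas.aestronglyMeasurable
      hZUmeas.aemeasurable).mpr hφintw
  -- identify Hw ∘ gw with the partial integral
  set K : E → ℝ := fun z => ∫ u, φ (z, u) ∂νU with hK_def
  have hK : ∀ z, Hw (gw z) = K z := by
    intro z
    have hmz : Measurable (fun u : ℝ => h (gw z + u, w)) :=
      hhmeas.comp ((measurable_const.add measurable_id).prodMk measurable_const)
    show Hw (gw z) = ∫ u, h (gw z + u, w) ∂(μw.map U)
    rw [hHw]
    exact (integral_map hUmeas.aemeasurable hmz.aestronglyMeasurable).symm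
  have hKmeas : StronglyMeasurable K :=
    hφmeas.stronglyMeasurable.integral_prod_right'
  have hKint : Integrable K νZ := hφρ.integral_prod_left
  have hHwZint : Integrable (fun ω => Hw (gw (Z ω))) μw := by
    have : Integrable (fun ω => K (Z ω)) μw :=
      (integrable_map_measure hKmeas.aestronglyMeasurable hZmeas.aemeasurable).mp hKint
    exact this.congr (Filter.Eventually.of_forall fun ω => (hK (Z ω)).symm)
  -- sub-σ-algebras
  have hm : MeasurableSpace.comap Z inferInstance ≤ _ := hZmeas.comap_le
  have hmbig : MeasurableSpace.comap (fun ω => (Ystar ω, Z ω, W ω)) inferInstance ≤ _ :=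
    (hYstarmeas.prodMk (hZmeas.prodMk hWmeas)).comap_le
  haveI : SigmaFinite (μw.trim hm) := by
    haveI : IsFiniteMeasure (μw.trim hm) := isFiniteMeasure_trim hm
    infer_instance
  -- the main set-integral identity
  symm
  refine ae_eq_condExp_of_forall_setIntegral_eq hm hYintw
    (fun A _ _ => hHwZint.restrict) ?_ ?_
  · -- set integral equality
    rintro A ⟨t, ht, rfl⟩ -
    -- Step 1: ∫_{Z⁻¹t} Y ∂μw = ∫_{Z⁻¹t} h(Ystar, W) ∂μw
    have hA : MeasurableSet (Z ⁻¹' t) := hZmeas ht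
    have hAs : MeasurableSet[MeasurableSpace.comap (fun ω => (Ystar ω, Z ω, W ω)) inferInstance] (Z ⁻¹' t ∩ s) := by
      refine ⟨Set.univ ×ˢ t ×ˢ {w}, MeasurableSet.univ.prod (ht.prod (measurableSet_singleton w)), ?_⟩
      ext ω
      simp only [Set.mem_preimage, Set.mem_prod, Set.mem_univ, Set.mem_singleton_iff,
        true_and, Set.mem_inter_iff, Set.mem_setOf_eq, hs_def]
    have step1 : ∫ x in Z ⁻¹' t, Y x ∂μw = ∫ x in Z ⁻¹' t, h (Ystar x, W x) ∂μw := by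
      rw [hμw', Measure.restrict_smul, integral_smul_measure, integral_smul_measure,
        Measure.restrict_restrict hA]
      congr 1
      calc ∫ x in Z ⁻¹' t ∩ s, Y x ∂μ
          = ∫ x in Z ⁻¹' t ∩ s, (μ[Y|MeasurableSpace.comap (fun ω => (Ystar ω, Z ω, W ω)) inferInstance]) x ∂μ :=
            (setIntegral_condExp hmbig hYint hAs).symm
        _ = ∫ x in Z ⁻¹' t ∩ s, h (Ystar x, W x) ∂μ :=
            setIntegral_congr_ae (hmbig _ hAs) (hcond.mono fun ω hω _ => hω)
    -- Step 2: replace integrand a.e.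
    have step2 : ∫ x in Z ⁻¹' t, h (Ystar x, W x) ∂μw
        = ∫ x in Z ⁻¹' t, h (gw (Z x) + U x, w) ∂μw :=
      setIntegral_congr_ae hA (hYstar_ae.mono fun ω hω _ => hω)
    -- Step 3: push forward to the product measure and use Fubini
    have hpre : (fun ω => (Z ω, U ω)) ⁻¹' (t ×ˢ Set.univ) = Z ⁻¹' t := by
      ext ω; simp
    have step3 : ∫ x in Z ⁻¹' t, h (gw (Z x) + U x, w) ∂μw
        = ∫ p in t ×ˢ Set.univ, φ p ∂(νZ.prod νU) := by
      rw [← hρ, setIntegral_map (ht.prod MeasurableSet.univ)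
        (by rw [hρ]; exact hφρ.aestronglyMeasurable) hZUmeas.aemeasurable, hpre]
    have hrestr : (νZ.restrict t).prod νU = (νZ.prod νU).restrict (t ×ˢ Set.univ) := by
      rw [← Measure.prod_restrict, Measure.restrict_univ]
    have step4 : ∫ p in t ×ˢ Set.univ, φ p ∂(νZ.prod νU) = ∫ z in t, K z ∂νZ := by
      rw [← hrestr]
      exact integral_prod φ (by rw [hrestr]; exact hφρ.restrict)
    have step5 : ∫ z in t, K z ∂νZ = ∫ x in Z ⁻¹' t, Hw (gw (Z x)) ∂μw := by
      rw [hνZ, setIntegral_map ht hKmeas.aestronglyMeasurable hZmeas.aemeasurable]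
      exact setIntegral_congr_ae hA
        (Filter.Eventually.of_forall fun ω _ => (hK (Z ω)).symm)
    rw [step1, step2, step3, step4, step5]
  · -- measurability with respect to comap Z
    have hZm : Measurable[MeasurableSpace.comap Z inferInstance] Z :=
      Measurable.of_comap_le le_rfl
    have : StronglyMeasurable[MeasurableSpace.comap Z inferInstance]
        (fun ω => Hw (gw (Z ω))) := by
      have : Measurable[MeasurableSpace.comap Z inferInstance] (fun ω => K (Z ω)) :=
        hKmeas.measurable.comp hZm
      have h2 : Measurable[MeasurableSpace.comap Z inferInstance] (fun ω => Hw (gw (Z ω))) := by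
        have heq : (fun ω => Hw (gw (Z ω))) = fun ω => K (Z ω) :=
          funext fun ω => hK (Z ω)
        rw [heq]; exact this
      exact h2.stronglyMeasurable
    exact this.aestronglyMeasurable
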